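/- Let n ≥ 1, let p₁, …, p_n ∈ ℝ³ and k₁, …, k_n > 0, and set k_c := Σᵢ kᵢ, p_c := (1/k_c) Σᵢ kᵢ pᵢ, and M := Σᵢ kᵢ (pᵢ − p_c)(pᵢ − p_c)ᵀ. Let R, R̂ ∈ SO(3), p ∈ ℝ³, and define yᵢ := Rᵀ(pᵢ − p), y_c := Rᵀ(p_c − p), and R̃ := R R̂ᵀ. Then (1/2) Σᵢ kᵢ ‖(pᵢ − p_c) − R̂ (yᵢ − y_c)‖² = tr((I₃ − R̃) M). -/

import Mathlib

open Matrix

/-- `SO(3)`: real 3×3 matrices with `Rᵀ R = I₃` and `det R = 1`. -/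
def SO3 (R : Matrix (Fin 3) (Fin 3) ℝ) : Prop := Rᵀ * R = 1 ∧ R.det = 1

lemma trace_mul_vecMulVec (A : Matrix (Fin 3) (Fin 3) ℝ) (q w : Fin 3 → ℝ) :
    (A * vecMulVec q w).trace = w ⬝ᵥ (A *ᵥ q) := by
  rw [vecMulVec_eq (Fin 1), ← Matrix.mul_assoc]
  have : A * replicateCol (Fin 1) q = replicateCol (Fin 1) (A *ᵥ q) := by
    ext i j
    simp [replicateCol, mul_apply, mulVec, dotProduct]
  rw [this, trace_replicateCol_mul_replicateRow, dotProduct_comm]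

/-- With landmarks `p i`, positive weights `k i`, `k_c = Σ kᵢ`, `p_c = (1/k_c) Σ kᵢ pᵢ`,
`M = Σ kᵢ (pᵢ − p_c)(pᵢ − p_c)ᵀ`, body-frame measurements `yᵢ = Rᵀ(pᵢ − p)`,
`y_c = Rᵀ(p_c − p)` and attitude error `R̃ = R R̂ᵀ`, the cost function satisfies
`(1/2) Σ kᵢ ‖(pᵢ − p_c) − R̂ (yᵢ − y_c)‖² = tr((I − R̃) M)`
(with `‖x‖² = x ⬝ᵥ x` the squared Euclidean norm). -/
theorem cost_function_eq_trace
    (n : ℕ) (hn : 1 ≤ n) (p : Fin n → Fin 3 → ℝ) (k : Fin n → ℝ)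
    (hk : ∀ i, 0 < k i)
    (kc : ℝ) (hkc : kc = ∑ i, k i)
    (pc : Fin 3 → ℝ) (hpc : pc = kc⁻¹ • ∑ i, k i • p i)
    (M : Matrix (Fin 3) (Fin 3) ℝ)
    (hM : M = ∑ i, k i • vecMulVec (p i - pc) (p i - pc))
    (R Rh : Matrix (Fin 3) (Fin 3) ℝ) (hR : SO3 R) (hRh : SO3 Rh)
    (pv : Fin 3 → ℝ)
    (y : Fin n → Fin 3 → ℝ) (hy : ∀ i, y i = Rᵀ.mulVec (p i - pv))
    (yc : Fin 3 → ℝ) (hyc : yc = Rᵀ.mulVec (pc - pv))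
    (Rt : Matrix (Fin 3) (Fin 3) ℝ) (hRt : Rt = R * Rhᵀ) :
    (1/2 : ℝ) * ∑ i, k i *
        ((p i - pc - Rh.mulVec (y i - yc)) ⬝ᵥ (p i - pc - Rh.mulVec (y i - yc))) =
      ((1 - Rt) * M).trace := by
  have hRRT : R * Rᵀ = 1 := mul_eq_one_comm.mp hR.1
  have hRt1 : Rt * Rtᵀ = 1 := by
    subst hRt
    rw [transpose_mul, transpose_transpose, mul_assoc, ← mul_assoc Rhᵀ, hRh.1, one_mul, hRRT]
  -- rewrite each residual
  have key : ∀ i, p i - pc - Rh *ᵥ (y i - yc) = p i - pc - Rtᵀ *ᵥ (p i - pc) := by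
    intro i
    rw [hy, hyc, ← mulVec_sub, hRt, transpose_mul, transpose_transpose, ← mulVec_mulVec]
    congr 2
    abel
  have key2 : ∀ q : Fin 3 → ℝ,
      (q - Rtᵀ *ᵥ q) ⬝ᵥ (q - Rtᵀ *ᵥ q) = 2 * ((1 - Rt) * vecMulVec q q).trace := by
    intro q
    have h1 : (Rtᵀ *ᵥ q) ⬝ᵥ (Rtᵀ *ᵥ q) = q ⬝ᵥ q := by
      rw [mulVec_transpose, ← dotProduct_mulVec, mulVec_vecMul, hRt1, one_mulVec]
    have h2 : q ⬝ᵥ (Rtᵀ *ᵥ q) = (Rt *ᵥ q) ⬝ᵥ q := by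
      rw [dotProduct_mulVec, vecMul_transpose]
    have h3 : (Rtᵀ *ᵥ q) ⬝ᵥ q = (Rt *ᵥ q) ⬝ᵥ q := by
      rw [mulVec_transpose, ← dotProduct_mulVec, dotProduct_comm]
    rw [sub_dotProduct, dotProduct_sub, dotProduct_sub, h1, h2, h3,
      trace_mul_vecMulVec, sub_mulVec, one_mulVec, dotProduct_sub,
      dotProduct_comm q (Rt *ᵥ q)]
    ring
  calc (1/2 : ℝ) * ∑ i, k i *
        ((p i - pc - Rh.mulVec (y i - yc)) ⬝ᵥ (p i - pc - Rh.mulVec (y i - yc)))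
      = ∑ i, ((1 - Rt) * (k i • vecMulVec (p i - pc) (p i - pc))).trace := by
        rw [Finset.mul_sum]
        refine Finset.sum_congr rfl fun i _ => ?_
        rw [key i, key2, Matrix.mul_smul, trace_smul]
        simp only [smul_eq_mul]
        ring
    _ = ((1 - Rt) * M).trace := by
        rw [hM, Finset.mul_sum, trace_sum]
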